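/- The polynomial V₀₄(b₁,b₂,b₃,b₄) = 2π² + (1/2)(b₁²+b₂²+b₃²+b₄²) satisfies Mirzakhani's recursion in the case (g,n) = (0,4): specifically, ∂(2b₁V₀₄)/∂b₁ = Σ_{i=2}^{4} ∫₀^∞ x·[H(x, b₁+b_i) + H(x, b₁-b_i)] dx, where H(s,t) = 1/(1+exp((s+t)/2)) + 1/(1+exp((s-t)/2)) and V₀₃ = 1. -/

import Mathlib

open MeasureTheory Real Set

/-- H(s,t) = 1/(1+exp((s+t)/2)) + 1/(1+exp((s-t)/2)). -/
noncomputable def H (s t : ℝ) : ℝ :=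
  1 / (1 + Real.exp ((s + t) / 2)) + 1 / (1 + Real.exp ((s - t) / 2))

/-- V₀₄(b₁,b₂,b₃,b₄) = 2π² + (1/2)(b₁²+b₂²+b₃²+b₄²). -/
noncomputable def V₀₄ (b₁ b₂ b₃ b₄ : ℝ) : ℝ :=
  2 * π ^ 2 + (1 / 2) * (b₁ ^ 2 + b₂ ^ 2 + b₃ ^ 2 + b₄ ^ 2)

noncomputable def ψ (u : ℝ) : ℝ := 1 / (1 + Real.exp (u / 2))

lemma psi_cont : Continuous ψ := by
  apply Continuous.div continuous_const
  · fun_prop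
  · intro x; positivity

lemma psi_nonneg (u : ℝ) : 0 ≤ ψ u := by unfold ψ; positivity

lemma psi_le_exp (u : ℝ) : ψ u ≤ Real.exp (-(u/2)) := by
  unfold ψ
  rw [div_le_iff₀ (by positivity)]
  rw [Real.exp_neg]
  rw [inv_mul_eq_div, le_div_iff₀ (exp_pos _)]
  have : Real.exp (u/2) * Real.exp (-(u/2)) = 1 := by rw [← Real.exp_add]; simp
  nlinarith [Real.exp_pos (-(u/2))]

lemma psi_add (u : ℝ) : ψ u + ψ (-u) = 1 := by
  unfold ψ
  have h1 := Real.exp_pos (u/2)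
  have h2 : Real.exp (-u/2) = (Real.exp (u/2))⁻¹ := by
    rw [← Real.exp_neg]; ring_nf
  rw [h2]
  field_simp
  ring

-- integrability of x * exp(-(m*x)) on Ioi 0
lemma integrable_mul_exp {m : ℝ} (hm : 0 < m) :
    IntegrableOn (fun x => x * Real.exp (-(m * x))) (Ioi (0:ℝ)) := by
  apply Integrable.mono' ((exp_neg_integrableOn_Ioi 0 (by linarith : 0 < m/2)).const_mul (1/m))
  · exact (continuous_id.mul (by fun_prop)).aestronglyMeasurable
  · filter_upwards [ae_restrict_mem measurableSet_Ioi] with x hx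
    have hx0 : (0:ℝ) < x := hx
    rw [Real.norm_eq_abs, abs_of_nonneg (by positivity)]
    have key : m * x ≤ Real.exp (m * x / 2) := by
      have h := Real.add_one_le_exp (m*x/4)
      have h2 : Real.exp (m*x/2) = Real.exp (m*x/4) * Real.exp (m*x/4) := by
        rw [← Real.exp_add]; ring_nf
      nlinarith [Real.exp_pos (m*x/4), sq_nonneg (m*x/4 - 1)]
    have hB : Real.exp (-(m/2)*x) = Real.exp (m*x/2) * Real.exp (-(m*x)) := by
      rw [← Real.exp_add]; ring_nf
    rw [hB, one_div, ← div_eq_inv_mul, le_div_iff₀ hm]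
    nlinarith [mul_le_mul_of_nonneg_right key (le_of_lt (Real.exp_pos (-(m*x))))]

lemma integral_x_exp : ∫ x in Ioi (0:ℝ), x * Real.exp (-x) = 1 := by
  have h := Real.Gamma_eq_integral (by norm_num : (0:ℝ) < 2)
  rw [Real.Gamma_two] at h
  calc ∫ x in Ioi (0:ℝ), x * Real.exp (-x)
      = ∫ x in Ioi (0:ℝ), Real.exp (-x) * x ^ ((2:ℝ) - 1) := by
        refine setIntegral_congr_fun measurableSet_Ioi (fun x hx => ?_)
        rw [show (2:ℝ) - 1 = 1 by norm_num, Real.rpow_one]; ring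
    _ = 1 := h.symm

lemma integral_mul_exp {m : ℝ} (hm : 0 < m) :
    ∫ x in Ioi (0:ℝ), x * Real.exp (-(m * x)) = 1 / m ^ 2 := by
  have h := integral_comp_mul_left_Ioi (fun y => y * Real.exp (-y)) 0 hm
  simp only [mul_zero] at h
  rw [integral_x_exp] at h
  have h2 : ∫ x in Ioi (0:ℝ), (m * x) * Real.exp (-(m * x))
      = m * ∫ x in Ioi (0:ℝ), x * Real.exp (-(m * x)) := by
    rw [← integral_const_mul]
    refine setIntegral_congr_fun measurableSet_Ioi (fun x hx => ?_)
    ring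
  rw [h2, smul_eq_mul, mul_one] at h
  have hm' : m ≠ 0 := ne_of_gt hm
  field_simp at h ⊢
  linear_combination h

lemma integrable_shift (c d : ℝ) :
    IntegrableOn (fun x => (x + c) * ψ (x + d)) (Ioi (0:ℝ)) := by
  apply Integrable.mono' ((exp_neg_integrableOn_Ioi 0 (by norm_num : (0:ℝ) < 1/4)).const_mul
    ((2 + |c|) * Real.exp (-(d/2))))
  · exact ((continuous_id.add continuous_const).mul
      (psi_cont.comp (continuous_id.add continuous_const))).aestronglyMeasurable
  · filter_upwards [ae_restrict_mem measurableSet_Ioi] with x hx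
    have hx0 : (0:ℝ) < x := hx
    rw [Real.norm_eq_abs]
    have h1 : |(x + c) * ψ (x + d)| ≤ (x + |c|) * Real.exp (-((x+d)/2)) := by
      rw [abs_mul, abs_of_nonneg (psi_nonneg _)]
      apply mul_le_mul ?_ (psi_le_exp _) (psi_nonneg _) (by positivity)
      calc |x + c| ≤ |x| + |c| := abs_add_le _ _
        _ = x + |c| := by rw [abs_of_pos hx0]
    refine le_trans h1 ?_
    have e1 : Real.exp (-((x+d)/2))
        = Real.exp (-(d/2)) * (Real.exp (-(x/4)) * Real.exp (-(x/4))) := by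
      rw [← Real.exp_add, ← Real.exp_add]; ring_nf
    have h2 : x * Real.exp (-(x/4)) ≤ 2 := by
      have h := Real.add_one_le_exp (x/8)
      have e2 : Real.exp (x/4) = Real.exp (x/8) * Real.exp (x/8) := by
        rw [← Real.exp_add]; ring_nf
      have key : x ≤ 2 * Real.exp (x/4) := by nlinarith [Real.exp_pos (x/8), sq_nonneg (x/8 - 1)]
      rw [show Real.exp (-(x/4)) = (Real.exp (x/4))⁻¹ by rw [← Real.exp_neg],
        ← div_eq_mul_inv, div_le_iff₀ (Real.exp_pos _)]
      linarith
    have h3 : Real.exp (-(x/4)) ≤ 1 := by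
      rw [Real.exp_le_one_iff]; linarith
    have e4 : -(1/4:ℝ) * x = -(x/4) := by ring
    rw [e1, e4]
    calc (x + |c|) * (Real.exp (-(d/2)) * (Real.exp (-(x/4)) * Real.exp (-(x/4))))
        = ((x * Real.exp (-(x/4)) + |c| * Real.exp (-(x/4))) * Real.exp (-(d/2)))
            * Real.exp (-(x/4)) := by ring
      _ ≤ ((2 + |c| * 1) * Real.exp (-(d/2))) * Real.exp (-(x/4)) := by
          apply mul_le_mul_of_nonneg_right _ (Real.exp_pos _).le
          apply mul_le_mul_of_nonneg_right _ (Real.exp_pos _).le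
          have h4 : |c| * Real.exp (-(x/4)) ≤ |c| * 1 :=
            mul_le_mul_of_nonneg_left h3 (abs_nonneg c)
          linarith
      _ = (2 + |c|) * Real.exp (-(d/2)) * Real.exp (-(x/4)) := by ring


lemma hasSum_even_inv_sq : HasSum (fun k : ℕ => (1:ℝ)/((2*(k:ℕ) : ℕ):ℝ)^2) (π^2/24) := by
  have h := hasSum_zeta_two.mul_left (1/4)
  have e : (fun n : ℕ => (1/4) * ((1:ℝ)/(n:ℝ)^2))
      = fun n : ℕ => (1:ℝ)/((2*(n:ℕ) : ℕ):ℝ)^2 := by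
    funext n
    rcases Nat.eq_zero_or_pos n with rfl|h0
    · simp
    · have : (n:ℝ) ≠ 0 := Nat.cast_ne_zero.mpr h0.ne'
      push_cast
      field_simp
      ring
  rw [e] at h
  convert h using 1
  · rfl
  ring

lemma hasSum_odd_inv_sq : HasSum (fun k : ℕ => (1:ℝ)/(2*(k:ℝ)+1)^2) (π^2/8) := by
  have hinj : Function.Injective (fun k : ℕ => 2*k+1) := fun a b hab => by
    dsimp at hab; omega
  have hs0 := hasSum_zeta_two.summable.comp_injective hinj
  have hs : Summable (fun k : ℕ => (1:ℝ)/((2*(k:ℕ)+1 : ℕ):ℝ)^2) :=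
    hs0.congr fun k => rfl
  obtain ⟨S, hS⟩ := hs
  have htot := HasSum.even_add_odd (f := fun n : ℕ => (1:ℝ)/(n:ℝ)^2) hasSum_even_inv_sq hS
  have hval : π^2/24 + S = π^2/6 := htot.unique hasSum_zeta_two
  have hS' : S = π^2/8 := by linarith
  rw [hS'] at hS
  have e : (fun k : ℕ => (1:ℝ)/((2*(k:ℕ)+1 : ℕ):ℝ)^2)
      = fun k : ℕ => (1:ℝ)/(2*(k:ℝ)+1)^2 := by
    funext k; push_cast; ring_nf
  rwa [e] at hS

lemma hasSum_eta_aux :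
    HasSum (fun k : ℕ => 4/(2*(k:ℝ)+1)^2 - 4/(2*(k:ℝ)+2)^2) (π^2/3) := by
  have hshift : HasSum (fun n : ℕ => (1:ℝ)/((n:ℝ)+1)^2) (π^2/6) := by
    have h := (hasSum_nat_add_iff (f := fun n : ℕ => (1:ℝ)/(n:ℝ)^2) 1).mpr
      (by simpa using hasSum_zeta_two)
    have e : (fun n : ℕ => (1:ℝ)/((n+1 : ℕ):ℝ)^2) = fun n : ℕ => (1:ℝ)/((n:ℝ)+1)^2 := by
      funext n; push_cast; ring_nf
    rwa [e] at h
  have h2 : HasSum (fun k : ℕ => (1:ℝ)/(2*(k:ℝ)+2)^2) (π^2/24) := by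
    have h := hshift.mul_left (1/4)
    have e : (fun n : ℕ => (1/4) * ((1:ℝ)/((n:ℝ)+1)^2)) = fun n : ℕ => (1:ℝ)/(2*(n:ℝ)+2)^2 := by
      funext n
      have : (n:ℝ) + 1 ≠ 0 := by positivity
      field_simp
      ring
    rw [e] at h
    convert h using 1
    · rfl
    ring
  have h3 := (hasSum_odd_inv_sq.mul_left (4:ℝ)).sub (h2.mul_left (4:ℝ))
  have e : (fun k : ℕ => 4 * ((1:ℝ)/(2*(k:ℝ)+1)^2) - 4 * ((1:ℝ)/(2*(k:ℝ)+2)^2))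
      = fun k : ℕ => 4/(2*(k:ℝ)+1)^2 - 4/(2*(k:ℝ)+2)^2 := by
    funext k; rw [mul_one_div, mul_one_div]
  rw [e] at h3
  convert h3 using 1
  · rfl
  ring

lemma integral_x_psi : ∫ x in Ioi (0:ℝ), x * ψ x = π^2/3 := by
  set F : ℕ → ℝ → ℝ := fun k x =>
    x * Real.exp (-((2*(k:ℝ)+1)/2 * x)) - x * Real.exp (-((2*(k:ℝ)+2)/2 * x)) with hF
  have hm1 : ∀ k : ℕ, (0:ℝ) < (2*(k:ℝ)+1)/2 := fun k => by positivity
  have hm2 : ∀ k : ℕ, (0:ℝ) < (2*(k:ℝ)+2)/2 := fun k => by positivity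
  have hint : ∀ k, Integrable (F k) (volume.restrict (Ioi 0)) := fun k =>
    (integrable_mul_exp (hm1 k)).sub (integrable_mul_exp (hm2 k))
  have hval : ∀ k : ℕ, ∫ x in Ioi (0:ℝ), F k x = 4/(2*(k:ℝ)+1)^2 - 4/(2*(k:ℝ)+2)^2 := by
    intro k
    rw [hF]
    rw [integral_sub (integrable_mul_exp (hm1 k)) (integrable_mul_exp (hm2 k)),
      integral_mul_exp (hm1 k), integral_mul_exp (hm2 k)]
    have e : ∀ m : ℝ, 0 < m → 1/((m/2)^2) = 4/m^2 := by
      intro m hm; rw [div_pow]; rw [one_div_div]; norm_num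
    rw [e _ (by positivity), e _ (by positivity)]
  -- bound for summability
  have hbnd : ∀ k : ℕ, (∫ x in Ioi (0:ℝ), ‖F k x‖) ≤ 4/(2*(k:ℝ)+1)^2 := by
    intro k
    have hb : (fun x => ‖F k x‖) ≤ᵐ[volume.restrict (Ioi 0)]
        fun x => x * Real.exp (-((2*(k:ℝ)+1)/2 * x)) := by
      filter_upwards [ae_restrict_mem measurableSet_Ioi] with x hx
      have hx0 : (0:ℝ) < x := hx
      have hle : Real.exp (-((2*(k:ℝ)+2)/2 * x)) ≤ Real.exp (-((2*(k:ℝ)+1)/2 * x)) := by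
        apply Real.exp_le_exp.mpr
        have : (2*(k:ℝ)+1)/2 * x ≤ (2*(k:ℝ)+2)/2 * x := by nlinarith
        linarith
      have h2 : 0 ≤ F k x := by
        rw [hF]; dsimp only
        nlinarith [Real.exp_pos (-((2*(k:ℝ)+2)/2 * x))]
      rw [Real.norm_eq_abs, abs_of_nonneg h2, hF]
      dsimp only
      nlinarith [Real.exp_pos (-((2*(k:ℝ)+2)/2 * x))]
    calc (∫ x in Ioi (0:ℝ), ‖F k x‖)
        ≤ ∫ x in Ioi (0:ℝ), x * Real.exp (-((2*(k:ℝ)+1)/2 * x)) :=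
          integral_mono_ae (hint k).norm (integrable_mul_exp (hm1 k)) hb
      _ = 1/((2*(k:ℝ)+1)/2)^2 := integral_mul_exp (hm1 k)
      _ = 4/(2*(k:ℝ)+1)^2 := by rw [div_pow, one_div_div]; norm_num
  have hsummg : Summable (fun k : ℕ => 4/(2*(k:ℝ)+1)^2) := by
    have := (hasSum_odd_inv_sq.mul_left (4:ℝ)).summable
    refine this.congr fun k => ?_
    rw [mul_one_div]
  have hsum : Summable fun k => ∫ x in Ioi (0:ℝ), ‖F k x‖ :=
    Summable.of_nonneg_of_le (fun k => integral_nonneg fun x => norm_nonneg _) hbnd hsummg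
  have key := integral_tsum_of_summable_integral_norm hint hsum
  have hpt : EqOn (fun x => x * ψ x) (fun x => ∑' k, F k x) (Ioi (0:ℝ)) := by
    intro x hx
    have hx0 : (0:ℝ) < x := hx
    set q := Real.exp (-(x/2)) with hq
    have hq0 : 0 < q := Real.exp_pos _
    have hq1 : q < 1 := by
      rw [hq, Real.exp_lt_one_iff]; linarith
    have hgeom := (hasSum_geometric_of_lt_one (by positivity : (0:ℝ) ≤ q^2)
      (by nlinarith : q^2 < 1)).mul_left (x * (q - q^2))
    have e : (fun k : ℕ => x * (q - q^2) * (q^2)^k) = fun k => F k x := by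
      funext k
      rw [hF]
      dsimp only
      have e1 : Real.exp (-((2*(k:ℝ)+1)/2 * x)) = q^(2*k+1) := by
        rw [hq, ← Real.exp_nat_mul]
        congr 1
        push_cast
        ring
      have e2 : Real.exp (-((2*(k:ℝ)+2)/2 * x)) = q^(2*k+2) := by
        rw [hq, ← Real.exp_nat_mul]
        congr 1
        push_cast
        ring
      rw [e1, e2]
      ring
    rw [e] at hgeom
    have hval2 : x * (q - q^2) * (1 - q^2)⁻¹ = x * ψ x := by
      have hex : Real.exp (x/2) = q⁻¹ := by
        rw [hq, ← Real.exp_neg]; ring_nf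
      have h1 : (1:ℝ) - q^2 ≠ 0 := by nlinarith
      unfold ψ
      rw [hex]
      field_simp
      ring
    rw [hval2] at hgeom
    exact (hgeom.tsum_eq).symm
  calc ∫ x in Ioi (0:ℝ), x * ψ x = ∫ x in Ioi (0:ℝ), ∑' k, F k x :=
        setIntegral_congr_fun measurableSet_Ioi hpt
    _ = ∑' k, ∫ x in Ioi (0:ℝ), F k x := key.symm
    _ = ∑' k : ℕ, (4/(2*(k:ℝ)+1)^2 - 4/(2*(k:ℝ)+2)^2) := tsum_congr hval
    _ = π^2/3 := hasSum_eta_aux.tsum_eq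

lemma K_lemma {a : ℝ} (ha : 0 ≤ a) :
    (∫ x in Ioi (0:ℝ), x * ψ (x + a)) + (∫ x in Ioi (0:ℝ), x * ψ (x - a))
      = a^2/2 + 2*(π^2/3) := by
  have cont_plus : Continuous (fun x : ℝ => (x + a) * ψ x) :=
    (continuous_id.add continuous_const).mul psi_cont
  have cont_minus : Continuous (fun x : ℝ => (x - a) * ψ x) :=
    (continuous_id.sub continuous_const).mul psi_cont
  have ix_plus : IntegrableOn (fun x => (x + a) * ψ x) (Ioi (0:ℝ)) := by
    simpa using integrable_shift a 0
  have ix_minus : IntegrableOn (fun x => (x - a) * ψ x) (Ioi (0:ℝ)) := by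
    simpa [← sub_eq_add_neg] using integrable_shift (-a) 0
  -- translation identities
  have t1 : ∫ x in Ioi (-a), (x + a) * ψ x = ∫ x in Ioi (0:ℝ), x * ψ (x - a) := by
    have h := (measurePreserving_add_right volume a).setIntegral_preimage_emb
      (measurableEmbedding_addRight a) (fun y => y * ψ (y - a)) (Ioi 0)
    rw [show (fun x : ℝ => x + a) ⁻¹' (Ioi 0) = Ioi (-a) by
      ext x; simp only [mem_preimage, mem_Ioi]; constructor <;> intro h <;> linarith] at h
    rw [← h]
    refine setIntegral_congr_fun measurableSet_Ioi fun x hx => ?_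
    rw [add_sub_cancel_right]
  have t2 : ∫ x in Ioi a, (x - a) * ψ x = ∫ x in Ioi (0:ℝ), x * ψ (x + a) := by
    have h := (measurePreserving_add_right volume (-a)).setIntegral_preimage_emb
      (measurableEmbedding_addRight (-a)) (fun y => y * ψ (y + a)) (Ioi 0)
    rw [show (fun x : ℝ => x + -a) ⁻¹' (Ioi 0) = Ioi a by
      ext x; simp only [mem_preimage, mem_Ioi]; constructor <;> intro h <;> linarith] at h
    rw [← h]
    refine setIntegral_congr_fun measurableSet_Ioi fun x hx => ?_
    rw [show x + -a = x - a by ring, sub_add_cancel]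
  -- splits
  have s1 : ∫ x in Ioi (-a), (x + a) * ψ x
      = (∫ x in Ioc (-a) 0, (x + a) * ψ x) + ∫ x in Ioi (0:ℝ), (x + a) * ψ x := by
    rw [← Ioc_union_Ioi_eq_Ioi (by linarith : -a ≤ 0)]
    exact setIntegral_union (Ioc_disjoint_Ioi le_rfl) measurableSet_Ioi
      (cont_plus.integrableOn_Ioc) ix_plus
  have s2 : ∫ x in Ioi (0:ℝ), (x - a) * ψ x
      = (∫ x in Ioc 0 a, (x - a) * ψ x) + ∫ x in Ioi a, (x - a) * ψ x := by
    rw [← Ioc_union_Ioi_eq_Ioi ha]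
    exact setIntegral_union (Ioc_disjoint_Ioi le_rfl) measurableSet_Ioi
      (cont_minus.integrableOn_Ioc) (ix_minus.mono_set (Ioi_subset_Ioi ha))
  -- the infinite parts
  have s3 : (∫ x in Ioi (0:ℝ), (x + a) * ψ x) + (∫ x in Ioi (0:ℝ), (x - a) * ψ x)
      = 2 * ∫ x in Ioi (0:ℝ), x * ψ x := by
    rw [← integral_add ix_plus ix_minus, ← integral_const_mul]
    refine setIntegral_congr_fun measurableSet_Ioi fun x hx => ?_
    ring
  -- the finite part
  have hfin : (∫ x in Ioc (-a) 0, (x + a) * ψ x) - (∫ x in Ioc 0 a, (x - a) * ψ x)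
      = a^2/2 := by
    rw [← intervalIntegral.integral_of_le (by linarith : -a ≤ 0),
        ← intervalIntegral.integral_of_le ha]
    have hc : ∫ x in (0:ℝ)..a, (-x + a) * ψ (-x) = ∫ x in (-a)..(0:ℝ), (x + a) * ψ x := by
      have h := intervalIntegral.integral_comp_neg (a := (0:ℝ)) (b := a)
        (fun x => (x + a) * ψ x)
      simpa using h
    have cneg : Continuous (fun x : ℝ => (-x + a) * ψ (-x)) :=
      (continuous_neg.add continuous_const).mul (psi_cont.comp continuous_neg)
    rw [← hc, ← intervalIntegral.integral_sub (cneg.intervalIntegrable _ _)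
      (cont_minus.intervalIntegrable _ _)]
    have : ∀ x : ℝ, (-x + a) * ψ (-x) - (x - a) * ψ x = a - x := by
      intro x
      linear_combination (a - x) * psi_add x
    rw [intervalIntegral.integral_congr (fun x _ => this x)]
    rw [intervalIntegral.integral_sub intervalIntegrable_const (intervalIntegral.intervalIntegrable_id),
      intervalIntegral.integral_const, integral_id]
    simp
    ring
  calc (∫ x in Ioi (0:ℝ), x * ψ (x + a)) + (∫ x in Ioi (0:ℝ), x * ψ (x - a))
      = (∫ x in Ioi a, (x - a) * ψ x) + ∫ x in Ioi (-a), (x + a) * ψ x := by rw [t1, t2]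
    _ = ((∫ x in Ioi (0:ℝ), (x - a) * ψ x) - ∫ x in Ioc 0 a, (x - a) * ψ x)
        + ((∫ x in Ioc (-a) 0, (x + a) * ψ x) + ∫ x in Ioi (0:ℝ), (x + a) * ψ x) := by
        rw [s1]; rw [s2]; ring
    _ = (2 * ∫ x in Ioi (0:ℝ), x * ψ x)
        + ((∫ x in Ioc (-a) 0, (x + a) * ψ x) - ∫ x in Ioc 0 a, (x - a) * ψ x) := by
        rw [← s3]; ring
    _ = a^2/2 + 2*(π^2/3) := by rw [integral_x_psi, hfin]; ring

noncomputable def H' (s t : ℝ) : ℝ :=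
  1 / (1 + Real.exp ((s + t) / 2)) + 1 / (1 + Real.exp ((s - t) / 2))

lemma H'_eq (x t : ℝ) : H' x t = ψ (x + t) + ψ (x - t) := rfl

lemma integrable_xpsi_shift (t : ℝ) :
    IntegrableOn (fun x => x * ψ (x + t)) (Ioi (0:ℝ)) := by
  simpa using integrable_shift 0 t

lemma integrable_xpsi_shift' (t : ℝ) :
    IntegrableOn (fun x => x * ψ (x - t)) (Ioi (0:ℝ)) := by
  simpa [← sub_eq_add_neg] using integrable_shift 0 (-t)

lemma integrable_xH (t : ℝ) : IntegrableOn (fun x => x * H' x t) (Ioi (0:ℝ)) := by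
  have h := (integrable_xpsi_shift t).add (integrable_xpsi_shift' t)
  refine h.congr (Filter.Eventually.of_forall fun x => ?_)
  simp only [Pi.add_apply]
  rw [H'_eq]; ring

lemma integral_xH (t : ℝ) :
    ∫ x in Ioi (0:ℝ), x * H' x t = t^2/2 + 2*(π^2/3) := by
  have step : ∫ x in Ioi (0:ℝ), x * H' x t
      = (∫ x in Ioi (0:ℝ), x * ψ (x + t)) + ∫ x in Ioi (0:ℝ), x * ψ (x - t) := by
    rw [← integral_add (integrable_xpsi_shift t) (integrable_xpsi_shift' t)]
    refine setIntegral_congr_fun measurableSet_Ioi fun x _ => ?_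
    rw [H'_eq]; ring
  rw [step]
  rcases le_total 0 t with ht|ht
  · exact K_lemma ht
  · have h := K_lemma (neg_nonneg.mpr ht)
    have e1 : ∀ x : ℝ, x + -t = x - t := fun x => by ring
    have e2 : ∀ x : ℝ, x - -t = x + t := fun x => by ring
    simp only [e1, e2] at h
    rw [add_comm] at h
    rw [h]
    ring

lemma integral_Hpair (b c : ℝ) :
    ∫ x in Ioi (0:ℝ), x * (H' x (b + c) + H' x (b - c))
      = b^2 + c^2 + 4*(π^2/3) := by
  have step : ∫ x in Ioi (0:ℝ), x * (H' x (b + c) + H' x (b - c))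
      = (∫ x in Ioi (0:ℝ), x * H' x (b + c)) + ∫ x in Ioi (0:ℝ), x * H' x (b - c) := by
    rw [← integral_add (integrable_xH (b+c)) (integrable_xH (b-c))]
    refine setIntegral_congr_fun measurableSet_Ioi fun x _ => ?_
    ring
  rw [step, integral_xH, integral_xH]
  ring

/-- V₀₄ satisfies Mirzakhani's recursion for (g,n) = (0,4):
    ∂(2b₁V₀₄)/∂b₁ = Σ_{i=2}^{4} ∫₀^∞ x·[H(x, b₁+bᵢ) + H(x, b₁-bᵢ)] dx (with V₀₃ = 1). -/
theorem stmt_14 (b₁ b₂ b₃ b₄ : ℝ) (h₁ : 0 ≤ b₁) (h₂ : 0 ≤ b₂) (h₃ : 0 ≤ b₃) (h₄ : 0 ≤ b₄) :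
    deriv (fun t => 2 * t * V₀₄ t b₂ b₃ b₄) b₁
      = (∫ x in Ioi (0:ℝ), x * (H x (b₁ + b₂) + H x (b₁ - b₂)))
        + (∫ x in Ioi (0:ℝ), x * (H x (b₁ + b₃) + H x (b₁ - b₃)))
        + (∫ x in Ioi (0:ℝ), x * (H x (b₁ + b₄) + H x (b₁ - b₄))) := by
  have hH : ∀ x t : ℝ, H x t = H' x t := fun x t => rfl
  have e : (fun t => 2 * t * V₀₄ t b₂ b₃ b₄)
      = fun t => 4*π^2*t + t^3 + (b₂^2+b₃^2+b₄^2)*t := by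
    funext t; unfold V₀₄; ring
  rw [e]
  have hd : HasDerivAt (fun t : ℝ => 4*π^2*t + t^3 + (b₂^2+b₃^2+b₄^2)*t)
      (4*π^2*1 + ((3:ℕ):ℝ)*b₁^(3-1) + (b₂^2+b₃^2+b₄^2)*1) b₁ := by
    exact (((hasDerivAt_id b₁).const_mul (4*π^2 : ℝ)).add (hasDerivAt_pow 3 b₁)).add
      ((hasDerivAt_id b₁).const_mul (b₂^2+b₃^2+b₄^2 : ℝ))
  rw [hd.deriv]
  simp only [hH]
  rw [integral_Hpair b₁ b₂, integral_Hpair b₁ b₃, integral_Hpair b₁ b₄]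
  norm_num
  ring
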